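/- Let d ∈ ℕ, d ≥ 1, ρ a density matrix on ℂ^d, {P(f)}_{f∈Ω} a PVM on a nonempty finite set Ω, and U : ℝ → M_d(ℂ) a family of unitary matrices. Then the quantum bi-probabilities satisfy causality: for every n ∈ ℕ, all times t_1 < … < t_n, and all f⁺, f⁻ ∈ Ω^n with f_n⁺ ≠ f_n⁻ one has Q_{t_n,…,t_1}(f⁺,f⁻) = 0. -/

import Mathlib

open Matrix
open scoped ComplexOrder

/-- The Heisenberg-picture projection at time `t`: `P_t(f) = U(t)* P(f) U(t)`. -/
noncomputable def heisenbergProj {d : ℕ} {Ω : Type*}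
    (P : Ω → Matrix (Fin d) (Fin d) ℂ) (U : ℝ → Matrix (Fin d) (Fin d) ℂ)
    (t : ℝ) (f : Ω) : Matrix (Fin d) (Fin d) ℂ :=
  (U t)ᴴ * P f * U t

/-- The quantum bi-probability
`Q_{t_n,…,t_1}(f⁺,f⁻) = tr[P_{t_n}(f_n⁺)⋯P_{t_1}(f_1⁺) ρ P_{t_1}(f_1⁻)⋯P_{t_n}(f_n⁻)]`,
where indices `j : Fin n` are ordered so that `j = 0` corresponds to the earliest time `t_1`. -/
noncomputable def quantumBiProb {d : ℕ} {Ω : Type*}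
    (ρ : Matrix (Fin d) (Fin d) ℂ) (P : Ω → Matrix (Fin d) (Fin d) ℂ)
    (U : ℝ → Matrix (Fin d) (Fin d) ℂ) {n : ℕ} (t : Fin n → ℝ)
    (fp fm : Fin n → Ω) : ℂ :=
  Matrix.trace
    ((List.ofFn fun j => heisenbergProj P U (t j) (fp j)).reverse.prod * ρ *
      (List.ofFn fun j => heisenbergProj P U (t j) (fm j)).prod)

/-- causality of quantum bi-probabilities: if the outcomes at the latest
time differ, `f_n⁺ ≠ f_n⁻`, then `Q_{t_n,…,t_1}(f⁺,f⁻) = 0`. -/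
theorem quantumBiProb_causality {d : ℕ} (hd : 1 ≤ d)
    {Ω : Type*} [Fintype Ω] [Nonempty Ω] [DecidableEq Ω]
    (ρ : Matrix (Fin d) (Fin d) ℂ) (hρ : ρ.PosSemidef) (hρtr : ρ.trace = 1)
    (P : Ω → Matrix (Fin d) (Fin d) ℂ)
    (hPsa : ∀ f, (P f).IsHermitian) (hPidem : ∀ f, P f * P f = P f)
    (hPorth : ∀ f f', f ≠ f' → P f * P f' = 0) (hPsum : ∑ f, P f = 1)
    (U : ℝ → Matrix (Fin d) (Fin d) ℂ)
    (hU : ∀ t, U t ∈ Matrix.unitaryGroup (Fin d) ℂ)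
    (n : ℕ) (t : Fin (n+1) → ℝ) (ht : StrictMono t)
    (fp fm : Fin (n+1) → Ω) (hne : fp (Fin.last n) ≠ fm (Fin.last n)) :
    quantumBiProb ρ P U t fp fm = 0 := by
  classical
  set X := heisenbergProj P U (t (Fin.last n)) (fp (Fin.last n)) with hX
  set Y := heisenbergProj P U (t (Fin.last n)) (fm (Fin.last n)) with hY
  have hYX : Y * X = 0 := by
    have hU1 : U (t (Fin.last n)) * (U (t (Fin.last n)))ᴴ = 1 := by
      have := (Matrix.mem_unitaryGroup_iff.mp (hU (t (Fin.last n))))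
      simpa [Matrix.star_eq_conjTranspose] using this
    have horth : P (fm (Fin.last n)) * P (fp (Fin.last n)) = 0 :=
      hPorth _ _ (Ne.symm hne)
    simp only [hY, hX, heisenbergProj]
    calc (U (t (Fin.last n)))ᴴ * P (fm (Fin.last n)) * U (t (Fin.last n)) *
          ((U (t (Fin.last n)))ᴴ * P (fp (Fin.last n)) * U (t (Fin.last n)))
        = (U (t (Fin.last n)))ᴴ * P (fm (Fin.last n)) *
          (U (t (Fin.last n)) * (U (t (Fin.last n)))ᴴ) *
          (P (fp (Fin.last n)) * U (t (Fin.last n))) := by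
          noncomm_ring
      _ = 0 := by rw [hU1]; simp only [Matrix.mul_assoc, Matrix.mul_one]; rw [← Matrix.mul_assoc (P (fm (Fin.last n))), horth]; simp
  have hofp : (List.ofFn fun j : Fin (n+1) => heisenbergProj P U (t j) (fp j)) =
      (List.ofFn fun j : Fin n => heisenbergProj P U (t j.castSucc) (fp j.castSucc)) ++ [X] := by
    rw [List.ofFn_succ']; simp [hX]
  have hofm : (List.ofFn fun j : Fin (n+1) => heisenbergProj P U (t j) (fm j)) =
      (List.ofFn fun j : Fin n => heisenbergProj P U (t j.castSucc) (fm j.castSucc)) ++ [Y] := by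
    rw [List.ofFn_succ']; simp [hY]
  set A := (List.ofFn fun j : Fin n => heisenbergProj P U (t j.castSucc) (fp j.castSucc)).reverse.prod
  set B := (List.ofFn fun j : Fin n => heisenbergProj P U (t j.castSucc) (fm j.castSucc)).prod
  have : quantumBiProb ρ P U t fp fm = Matrix.trace ((X * A * ρ * B) * Y) := by
    rw [quantumBiProb, hofp, hofm]
    simp [Matrix.mul_assoc]
    rfl
  rw [this, Matrix.trace_mul_comm]
  have : Y * (X * A * ρ * B) = (Y * X) * (A * ρ * B) := by noncomm_ring
  rw [this, hYX]
  simp
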